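/- arXiv:1906.10274 — 4 statements merged into one kernel-verified Lean document; each statement's English description precedes it below -/
import Mathlib

section
/- Let n and N be positive integers and let S : [-π, π] → Matrix n n ℂ be an integrable matrix-valued function such that S(ω) is Hermitian positive semidefinite for almost every ω ∈ [-π, π]. Define R : ℤ → Matrix n n ℂ by R(k) = ∫_{-π}^{π} e^{ikω} S(ω) dω, and let R̄(N) be the Nn × Nn block Toeplitz matrix whose (l,m) block (1 ≤ l, m ≤ N) is R(m − l). Then R̄(N) is Hermitian positive semidefinite. -/
open MeasureTheory Matrix Real
open scoped ComplexOrder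

private lemma econj (k : ℤ) (ω : ℝ) :
    (starRingEnd ℂ) (Complex.exp (Complex.I * k * ω)) = Complex.exp (Complex.I * (-k) * ω) := by
  rw [← Complex.exp_conj]
  congr 1
  simp [Complex.conj_I, Complex.conj_ofReal]

private lemma enorm (k : ℤ) (ω : ℝ) : ‖Complex.exp (Complex.I * k * ω)‖ = 1 := by
  have h : Complex.I * k * ω = ((k * ω : ℝ) : ℂ) * Complex.I := by push_cast; ring
  rw [h, Complex.norm_exp_ofReal_mul_I]

private lemma quad_eq {n N : ℕ} (A : Matrix (Fin n) (Fin n) ℂ) (x : Fin N × Fin n → ℂ)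
    (ω : ℝ) :
    ∑ l : Fin N, ∑ i : Fin n, ∑ m : Fin N, ∑ j : Fin n,
      (starRingEnd ℂ) (x (l, i)) *
        (Complex.exp (Complex.I * (((((m : ℕ) : ℤ) - ((l : ℕ) : ℤ)) : ℤ) : ℂ) * ω) * A i j *
          x (m, j))
    = star (fun i => ∑ m : Fin N, Complex.exp (Complex.I * ((m : ℕ) : ℤ) * ω) * x (m, i)) ⬝ᵥ
        (A *ᵥ fun j => ∑ m : Fin N, Complex.exp (Complex.I * ((m : ℕ) : ℤ) * ω) * x (m, j)) := by
  symm
  simp only [dotProduct, mulVec, Pi.star_apply, RCLike.star_def]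
  have hij : ∀ (i j : Fin n),
      (starRingEnd ℂ) (∑ l : Fin N, Complex.exp (Complex.I * ((l : ℕ) : ℤ) * ω) * x (l, i)) *
        (∑ m : Fin N, A i j * (Complex.exp (Complex.I * ((m : ℕ) : ℤ) * ω) * x (m, j)))
      = ∑ l : Fin N, ∑ m : Fin N, (starRingEnd ℂ) (x (l, i)) *
          (Complex.exp (Complex.I * (((((m : ℕ) : ℤ) - ((l : ℕ) : ℤ)) : ℤ) : ℂ) * ω) * A i j *
            x (m, j)) := by
    intro i j
    rw [map_sum, Finset.sum_mul]
    refine Finset.sum_congr rfl fun l _ => ?_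
    rw [Finset.mul_sum]
    refine Finset.sum_congr rfl fun m _ => ?_
    rw [_root_.map_mul, econj]
    have he : Complex.exp (Complex.I * (((((m : ℕ) : ℤ) - ((l : ℕ) : ℤ)) : ℤ) : ℂ) * ω)
        = Complex.exp (Complex.I * (-((l : ℕ) : ℤ)) * ω) *
          Complex.exp (Complex.I * ((m : ℕ) : ℤ) * ω) := by
      rw [← Complex.exp_add]; congr 1; push_cast; ring
    rw [he]; ring
  calc
    ∑ i : Fin n,
        (starRingEnd ℂ) (∑ l : Fin N, Complex.exp (Complex.I * ((l : ℕ) : ℤ) * ω) * x (l, i)) *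
          ∑ j : Fin n, A i j * ∑ m : Fin N, Complex.exp (Complex.I * ((m : ℕ) : ℤ) * ω) * x (m, j)
      = ∑ i : Fin n, ∑ j : Fin n,
          (starRingEnd ℂ) (∑ l : Fin N, Complex.exp (Complex.I * ((l : ℕ) : ℤ) * ω) * x (l, i)) *
            (∑ m : Fin N, A i j * (Complex.exp (Complex.I * ((m : ℕ) : ℤ) * ω) * x (m, j))) := by
        refine Finset.sum_congr rfl fun i _ => ?_
        rw [Finset.mul_sum]
        refine Finset.sum_congr rfl fun j _ => ?_
        rw [Finset.mul_sum]
    _ = ∑ i : Fin n, ∑ j : Fin n, ∑ l : Fin N, ∑ m : Fin N, (starRingEnd ℂ) (x (l, i)) *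
          (Complex.exp (Complex.I * (((((m : ℕ) : ℤ) - ((l : ℕ) : ℤ)) : ℤ) : ℂ) * ω) * A i j *
            x (m, j)) :=
        Finset.sum_congr rfl fun i _ => Finset.sum_congr rfl fun j _ => hij i j
    _ = ∑ i : Fin n, ∑ l : Fin N, ∑ j : Fin n, ∑ m : Fin N, (starRingEnd ℂ) (x (l, i)) *
          (Complex.exp (Complex.I * (((((m : ℕ) : ℤ) - ((l : ℕ) : ℤ)) : ℤ) : ℂ) * ω) * A i j *
            x (m, j)) :=
        Finset.sum_congr rfl fun i _ => Finset.sum_comm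
    _ = ∑ l : Fin N, ∑ i : Fin n, ∑ j : Fin n, ∑ m : Fin N, (starRingEnd ℂ) (x (l, i)) *
          (Complex.exp (Complex.I * (((((m : ℕ) : ℤ) - ((l : ℕ) : ℤ)) : ℤ) : ℂ) * ω) * A i j *
            x (m, j)) :=
        Finset.sum_comm
    _ = ∑ l : Fin N, ∑ i : Fin n, ∑ m : Fin N, ∑ j : Fin n, (starRingEnd ℂ) (x (l, i)) *
          (Complex.exp (Complex.I * (((((m : ℕ) : ℤ) - ((l : ℕ) : ℤ)) : ℤ) : ℂ) * ω) * A i j *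
            x (m, j)) :=
        Finset.sum_congr rfl fun l _ => Finset.sum_congr rfl fun i _ => Finset.sum_comm

/-- If `S : [-π, π] → Matrix n n ℂ` is integrable and a.e. Hermitian
positive semidefinite, and `R(k) = ∫_{-π}^{π} e^{ikω} S(ω) dω`, then the `Nn × Nn`
block Toeplitz matrix `R̄(N)` with `(l, m)` block `R(m − l)` is Hermitian positive
semidefinite. -/
theorem block_toeplitz_of_spectral_measure_posSemidef
    (n N : ℕ) (hn : 0 < n) (hN : 0 < N)
    (S : ℝ → Matrix (Fin n) (Fin n) ℂ)
    (hS : ∀ i j, IntegrableOn (fun ω => S ω i j) (Set.Icc (-π) π))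
    (hSpsd : ∀ᵐ ω ∂(volume.restrict (Set.Icc (-π) π)), (S ω).PosSemidef)
    (R : ℤ → Matrix (Fin n) (Fin n) ℂ)
    (hR : ∀ (k : ℤ) (i j : Fin n),
      R k i j = ∫ ω in Set.Icc (-π) π, Complex.exp (Complex.I * k * ω) * S ω i j)
    (Rbar : Matrix (Fin N × Fin n) (Fin N × Fin n) ℂ)
    (hRbar : ∀ (l m : Fin N) (i j : Fin n),
      Rbar (l, i) (m, j) = R ((m : ℤ) - (l : ℤ)) i j) :
    Rbar.PosSemidef := by
  have hint : ∀ (k : ℤ) (i j : Fin n),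
      IntegrableOn (fun ω : ℝ => Complex.exp (Complex.I * k * ω) * S ω i j)
        (Set.Icc (-π) π) := by
    intro k i j
    refine (hS i j).bdd_mul ?_ (Filter.Eventually.of_forall fun ω => le_of_eq (enorm k ω))
    exact (Continuous.aestronglyMeasurable (by fun_prop))
  refine Matrix.PosSemidef.of_dotProduct_mulVec_nonneg ?_ ?_
  · -- Hermitian
    ext ⟨m, j⟩ ⟨l, i⟩
    rw [conjTranspose_apply, hRbar, hRbar, hR, hR,
      show ∀ z : ℂ, star z = (starRingEnd ℂ) z from fun _ => rfl, ← integral_conj]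
    refine integral_congr_ae ?_
    filter_upwards [hSpsd] with ω hω
    have h1 : (starRingEnd ℂ) (S ω i j) = S ω j i := hω.1.apply j i
    rw [_root_.map_mul, econj, h1]
    congr 2
    push_cast
    ring
  · intro x
    have hterm : ∀ (l m : Fin N) (i j : Fin n), IntegrableOn
        (fun ω : ℝ => (starRingEnd ℂ) (x (l, i)) *
          (Complex.exp (Complex.I * (((((m : ℕ) : ℤ) - ((l : ℕ) : ℤ)) : ℤ) : ℂ) * ω) * S ω i j *
            x (m, j)))
        (Set.Icc (-π) π) := by
      intro l m i j
      exact ((hint (((m : ℕ) : ℤ) - ((l : ℕ) : ℤ)) i j).mul_const _).const_mul _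
    have key : star x ⬝ᵥ Rbar *ᵥ x = ∫ ω in Set.Icc (-π) π,
        star (fun i => ∑ m : Fin N, Complex.exp (Complex.I * ((m : ℕ) : ℤ) * ω) * x (m, i)) ⬝ᵥ
          (S ω *ᵥ fun j => ∑ m : Fin N,
            Complex.exp (Complex.I * ((m : ℕ) : ℤ) * ω) * x (m, j)) := by
      have h1 : star x ⬝ᵥ Rbar *ᵥ x
          = ∑ l : Fin N, ∑ i : Fin n, ∑ m : Fin N, ∑ j : Fin n,
            ∫ ω in Set.Icc (-π) π, (starRingEnd ℂ) (x (l, i)) *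
              (Complex.exp (Complex.I * (((((m : ℕ) : ℤ) - ((l : ℕ) : ℤ)) : ℤ) : ℂ) * ω) *
                S ω i j * x (m, j)) := by
        simp only [dotProduct, mulVec, Pi.star_apply, RCLike.star_def, Finset.mul_sum]
        rw [Fintype.sum_prod_type]
        refine Finset.sum_congr rfl fun l _ => Finset.sum_congr rfl fun i _ => ?_
        rw [Fintype.sum_prod_type]
        refine Finset.sum_congr rfl fun m _ => Finset.sum_congr rfl fun j _ => ?_
        rw [hRbar, hR, ← integral_mul_const, ← integral_const_mul]
      have h2 : (∫ ω in Set.Icc (-π) π,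
          ∑ l : Fin N, ∑ i : Fin n, ∑ m : Fin N, ∑ j : Fin n,
            (starRingEnd ℂ) (x (l, i)) *
              (Complex.exp (Complex.I * (((((m : ℕ) : ℤ) - ((l : ℕ) : ℤ)) : ℤ) : ℂ) * ω) *
                S ω i j * x (m, j)))
          = ∑ l : Fin N, ∑ i : Fin n, ∑ m : Fin N, ∑ j : Fin n,
            ∫ ω in Set.Icc (-π) π, (starRingEnd ℂ) (x (l, i)) *
              (Complex.exp (Complex.I * (((((m : ℕ) : ℤ) - ((l : ℕ) : ℤ)) : ℤ) : ℂ) * ω) *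
                S ω i j * x (m, j)) := by
        rw [integral_finset_sum _ (fun l _ => integrable_finset_sum _ (fun i _ =>
          integrable_finset_sum _ (fun m _ => integrable_finset_sum _ (fun j _ =>
            hterm l m i j))))]
        refine Finset.sum_congr rfl fun l _ => ?_
        rw [integral_finset_sum _ (fun i _ => integrable_finset_sum _ (fun m _ =>
          integrable_finset_sum _ (fun j _ => hterm l m i j)))]
        refine Finset.sum_congr rfl fun i _ => ?_
        rw [integral_finset_sum _ (fun m _ => integrable_finset_sum _ (fun j _ =>
          hterm l m i j))]
        refine Finset.sum_congr rfl fun m _ => ?_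
        rw [integral_finset_sum _ (fun j _ => hterm l m i j)]
      rw [h1, ← h2]
      exact integral_congr_ae (Filter.Eventually.of_forall fun ω => quad_eq (S ω) x ω)
    have hFint : IntegrableOn (fun ω : ℝ =>
        star (fun i => ∑ m : Fin N, Complex.exp (Complex.I * ((m : ℕ) : ℤ) * ω) * x (m, i)) ⬝ᵥ
          (S ω *ᵥ fun j => ∑ m : Fin N,
            Complex.exp (Complex.I * ((m : ℕ) : ℤ) * ω) * x (m, j))) (Set.Icc (-π) π) := by
      have hsum : IntegrableOn (fun ω : ℝ =>
          ∑ l : Fin N, ∑ i : Fin n, ∑ m : Fin N, ∑ j : Fin n,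
            (starRingEnd ℂ) (x (l, i)) *
              (Complex.exp (Complex.I * (((((m : ℕ) : ℤ) - ((l : ℕ) : ℤ)) : ℤ) : ℂ) * ω) *
                S ω i j * x (m, j))) (Set.Icc (-π) π) := by
        apply integrable_finset_sum
        intro l _
        apply integrable_finset_sum
        intro i _
        apply integrable_finset_sum
        intro m _
        apply integrable_finset_sum
        intro j _
        exact hterm l m i j
      exact hsum.congr (Filter.Eventually.of_forall fun ω => quad_eq (S ω) x ω)
    have hpt : ∀ᵐ (ω : ℝ) ∂(volume.restrict (Set.Icc (-π) π)),
        (0 : ℂ) ≤ star (fun i => ∑ m : Fin N,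
            Complex.exp (Complex.I * ((m : ℕ) : ℤ) * (ω : ℂ)) * x (m, i)) ⬝ᵥ
          (S ω *ᵥ fun j => ∑ m : Fin N,
            Complex.exp (Complex.I * ((m : ℕ) : ℤ) * (ω : ℂ)) * x (m, j)) := by
      filter_upwards [hSpsd] with ω hω
      exact hω.dotProduct_mulVec_nonneg _
    rw [key, Complex.nonneg_iff]
    constructor
    · rw [← RCLike.re_to_complex, ← integral_re hFint]
      refine integral_nonneg_of_ae ?_
      filter_upwards [hpt] with ω hω
      exact (Complex.nonneg_iff.mp hω).1
    · rw [← RCLike.im_to_complex, ← integral_im hFint]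
      refine (integral_eq_zero_of_ae ?_).symm
      filter_upwards [hpt] with ω hω
      exact ((Complex.nonneg_iff.mp hω).2).symm
end

section
/- Let n and N be positive integers and let S : [-π, π] → Matrix n n ℂ be an integrable matrix-valued function such that S(ω) is Hermitian positive semidefinite for almost every ω ∈ [-π, π]. Define R(k) = ∫_{-π}^{π} e^{ikω} S(ω) dω and let R̄(N) be the Nn × Nn block Toeplitz matrix whose (l,m) block is R(m − l). Then R̄(N) is positive definite if and only if for every nonzero q = (q_1, …, q_N) ∈ (ℂ^n)^N, the set { ω ∈ [-π, π] : S(ω) Q(ω) ≠ 0 } has positive Lebesgue measure, where Q(ω) = Σ_{k=1}^N e^{ikω} q_k. Equivalently, R̄(N) is positive definite if and only if no nonzero filter Q lies in the null space of S(ω) for almost every ω. -/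
open MeasureTheory Matrix Real
open scoped ComplexOrder

private lemma exp_I_conj (c : ℂ) (hc : c.im = 0) (ω : ℝ) :
    (starRingEnd ℂ) (Complex.exp (Complex.I * c * ω)) = Complex.exp (Complex.I * (-c) * ω) := by
  rw [← Complex.exp_conj]
  congr 1
  simp [Complex.ext_iff, Complex.mul_re, Complex.mul_im, hc]

private lemma exp_I_norm (c : ℂ) (hc : c.im = 0) (ω : ℝ) :
    ‖Complex.exp (Complex.I * c * ω)‖ = 1 := by
  rw [Complex.norm_exp]
  simp [Complex.mul_re, Complex.mul_im, hc]

/-- With `S : [-π, π] → Matrix n n ℂ` integrable and a.e. Hermitian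
positive semidefinite, `R(k) = ∫_{-π}^{π} e^{ikω} S(ω) dω`, and `R̄(N)` the `Nn × Nn`
block Toeplitz matrix with `(l, m)` block `R(m − l)`: `R̄(N)` is positive definite iff
for every nonzero `q = (q_1, …, q_N) ∈ (ℂ^n)^N` the set
`{ ω ∈ [-π, π] : S(ω) Q(ω) ≠ 0 }` has positive Lebesgue measure, where
`Q(ω) = Σ_{k=1}^N e^{ikω} q_k`. -/
theorem block_toeplitz_posDef_iff_filter_not_ae_null
    (n N : ℕ) (hn : 0 < n) (hN : 0 < N)
    (S : ℝ → Matrix (Fin n) (Fin n) ℂ)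
    (hS : ∀ i j, IntegrableOn (fun ω => S ω i j) (Set.Icc (-π) π))
    (hSpsd : ∀ᵐ ω ∂(volume.restrict (Set.Icc (-π) π)), (S ω).PosSemidef)
    (R : ℤ → Matrix (Fin n) (Fin n) ℂ)
    (hR : ∀ (k : ℤ) (i j : Fin n),
      R k i j = ∫ ω in Set.Icc (-π) π, Complex.exp (Complex.I * k * ω) * S ω i j)
    (Rbar : Matrix (Fin N × Fin n) (Fin N × Fin n) ℂ)
    (hRbar : ∀ (l m : Fin N) (i j : Fin n),
      Rbar (l, i) (m, j) = R ((m : ℤ) - (l : ℤ)) i j) :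
    Rbar.PosDef ↔
      ∀ q : Fin N → (Fin n → ℂ), q ≠ 0 →
        0 < volume {ω | ω ∈ Set.Icc (-π) π ∧
          S ω *ᵥ (∑ k : Fin N, Complex.exp (Complex.I * ((k : ℕ) + 1) * ω) • q k) ≠ 0} := by
  set μ := volume.restrict (Set.Icc (-π) π) with hμ
  set E : Fin N → ℝ → ℂ := fun k ω => Complex.exp (Complex.I * ((k : ℕ) + 1) * ω) with hE
  -- basic facts about E
  have hEnorm : ∀ (k : Fin N) (ω : ℝ), ‖E k ω‖ = 1 := fun k ω => exp_I_norm _ (by simp) ω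
  have hEmeas : ∀ k : Fin N, Continuous (E k) := fun k => by
    exact Complex.continuous_exp.comp (continuous_const.mul Complex.continuous_ofReal)
  have hEE : ∀ (l m : Fin N) (ω : ℝ),
      Complex.exp (Complex.I * ((((m : ℤ) - (l : ℤ)) : ℤ) : ℂ) * ω)
        = (starRingEnd ℂ) (E l ω) * E m ω := by
    intro l m ω
    rw [hE]
    simp only
    rw [exp_I_conj _ (by simp), ← Complex.exp_add]
    congr 1
    push_cast
    ring
  -- Hermitian part
  have hSherm : ∀ᵐ ω ∂μ, (S ω).IsHermitian := hSpsd.mono fun ω h => h.1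
  have hherm : Rbar.IsHermitian := by
    refine Matrix.ext fun p1 p2 => ?_
    rcases p1 with ⟨l, i⟩
    rcases p2 with ⟨m, j⟩
    rw [Matrix.conjTranspose_apply, hRbar, hRbar, hR, hR, RCLike.star_def, ← integral_conj]
    refine integral_congr_ae (hSherm.mono fun ω hω => ?_)
    have h1 : (starRingEnd ℂ) (Complex.exp (Complex.I * ((((l : ℤ) - (m : ℤ)) : ℤ) : ℂ) * ω))
        = Complex.exp (Complex.I * (-((((l : ℤ) - (m : ℤ)) : ℤ) : ℂ)) * ω) :=
      exp_I_conj _ (by simp) ω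
    simp only [_root_.map_mul, h1]
    rw [show (starRingEnd ℂ) (S ω j i) = S ω i j from hω.apply i j]
    congr 2
    push_cast
    ring
  -- the key equivalence, for an arbitrary q
  have key : ∀ q : Fin N → (Fin n → ℂ),
      ((0 : ℂ) < star (fun p : Fin N × Fin n => q p.1 p.2) ⬝ᵥ
          Rbar *ᵥ (fun p : Fin N × Fin n => q p.1 p.2)) ↔
        0 < volume {ω | ω ∈ Set.Icc (-π) π ∧
          S ω *ᵥ (∑ k : Fin N, Complex.exp (Complex.I * ((k : ℕ) + 1) * ω) • q k) ≠ 0} := by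
    intro q
    set Q : ℝ → Fin n → ℂ := fun ω => ∑ k : Fin N, E k ω • q k with hQ
    set f : ℝ → ℂ := fun ω => star (Q ω) ⬝ᵥ (S ω *ᵥ Q ω) with hf
    set t : Fin N → Fin N → Fin n → Fin n → ℝ → ℂ := fun l m i j ω =>
      ((starRingEnd ℂ) (q l i) * q m j) * ((starRingEnd ℂ) (E l ω) * E m ω * S ω i j) with ht
    -- integrability of the pieces
    have hgint : ∀ (l m : Fin N) (i j : Fin n),
        Integrable (fun ω => ((starRingEnd ℂ) (E l ω) * E m ω) * S ω i j) μ := by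
      intro l m i j
      refine Integrable.bdd_mul (c := 1) (hS i j) ?_ (Filter.Eventually.of_forall fun ω => ?_)
      · exact ((Complex.continuous_conj.comp (hEmeas l)).mul (hEmeas m)).aestronglyMeasurable
      · rw [norm_mul, RCLike.norm_conj, hEnorm, hEnorm, mul_one]
    have htint : ∀ (l m : Fin N) (i j : Fin n), Integrable (t l m i j) μ := by
      intro l m i j
      simpa only [ht, mul_assoc] using (hgint l m i j).const_mul ((starRingEnd ℂ) (q l i) * q m j)
    -- pointwise expansion
    have hpt : ∀ ω : ℝ, f ω = ∑ l, ∑ m, ∑ i, ∑ j, t l m i j ω := by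
      intro ω
      rw [hf, hQ, ht]
      simp only [dotProduct, mulVec, Finset.sum_apply, Pi.smul_apply, smul_eq_mul, Pi.star_apply,
        star_sum, map_sum, _root_.map_mul, Finset.sum_mul, Finset.mul_sum]
      conv_lhs => enter [2, i, 2, j]; rw [Finset.sum_comm]
      conv_lhs => enter [2, i]; rw [Finset.sum_comm]
      rw [Finset.sum_comm]
      refine Finset.sum_congr rfl fun l _ => ?_
      conv_lhs => enter [2, i]; rw [Finset.sum_comm]
      rw [Finset.sum_comm]
      refine Finset.sum_congr rfl fun m _ => Finset.sum_congr rfl fun i _ =>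
        Finset.sum_congr rfl fun j _ => ?_
      simp only [star_mul', starRingEnd_apply]
      ring
    have hfint : Integrable f μ := by
      refine (integrable_finset_sum _ fun l _ => integrable_finset_sum _ fun m _ =>
        integrable_finset_sum _ fun i _ => integrable_finset_sum _ fun j _ => htint l m i j).congr
        (Filter.Eventually.of_forall fun ω => (hpt ω).symm)
    -- the quadratic form equals the integral of f
    have hterm : ∀ (l m : Fin N) (i j : Fin n),
        (starRingEnd ℂ) (q l i) * (Rbar (l, i) (m, j) * q m j) = ∫ ω, t l m i j ω ∂μ := by
      intro l m i j
      rw [hRbar, hR]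
      have h1 : (∫ ω in Set.Icc (-π) π,
            Complex.exp (Complex.I * ((((m : ℤ) - (l : ℤ)) : ℤ) : ℂ) * ω) * S ω i j)
          = ∫ ω, ((starRingEnd ℂ) (E l ω) * E m ω) * S ω i j ∂μ := by
        rw [← hμ]
        exact integral_congr_ae (Filter.Eventually.of_forall fun ω => by simp only [hEE])
      rw [h1]
      have h2 : (starRingEnd ℂ) (q l i) *
            ((∫ ω, ((starRingEnd ℂ) (E l ω) * E m ω) * S ω i j ∂μ) * q m j)
          = ((starRingEnd ℂ) (q l i) * q m j) *
            ∫ ω, ((starRingEnd ℂ) (E l ω) * E m ω) * S ω i j ∂μ := by ring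
      rw [h2, ← integral_const_mul]
    have hz : star (fun p : Fin N × Fin n => q p.1 p.2) ⬝ᵥ
        Rbar *ᵥ (fun p : Fin N × Fin n => q p.1 p.2) = ∫ ω, f ω ∂μ := by
      have hx : star (fun p : Fin N × Fin n => q p.1 p.2) ⬝ᵥ
          Rbar *ᵥ (fun p : Fin N × Fin n => q p.1 p.2)
          = ∑ l : Fin N, ∑ i : Fin n, ∑ m : Fin N, ∑ j : Fin n,
            (starRingEnd ℂ) (q l i) * (Rbar (l, i) (m, j) * q m j) := by
        simp only [dotProduct, mulVec, Pi.star_apply, Fintype.sum_prod_type, Finset.mul_sum,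
          RCLike.star_def, dotProduct]
      have hsum : ∫ ω, (∑ l, ∑ m, ∑ i, ∑ j, t l m i j ω) ∂μ
          = ∑ l, ∑ m, ∑ i, ∑ j, ∫ ω, t l m i j ω ∂μ := by
        rw [integral_finset_sum _ fun l _ => integrable_finset_sum _ fun m _ =>
          integrable_finset_sum _ fun i _ => integrable_finset_sum _ fun j _ => htint l m i j]
        refine Finset.sum_congr rfl fun l _ => ?_
        rw [integral_finset_sum _ fun m _ => integrable_finset_sum _ fun i _ =>
          integrable_finset_sum _ fun j _ => htint l m i j]
        refine Finset.sum_congr rfl fun m _ => ?_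
        rw [integral_finset_sum _ fun i _ => integrable_finset_sum _ fun j _ => htint l m i j]
        exact Finset.sum_congr rfl fun i _ => integral_finset_sum _ fun j _ => htint l m i j
      rw [hx]
      simp only [hterm]
      conv_lhs => enter [2, l]; rw [Finset.sum_comm]
      exact ((integral_congr_ae (Filter.Eventually.of_forall hpt)).trans hsum).symm
    -- nonnegativity / vanishing analysis
    have hpos : ∀ᵐ ω ∂μ, (0 : ℂ) ≤ f ω := hSpsd.mono fun ω h => h.dotProduct_mulVec_nonneg (Q ω)
    have him : ∀ᵐ ω ∂μ, (f ω).im = 0 := hpos.mono fun ω h => by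
      have := (Complex.le_def.mp h).2
      simpa using this.symm
    have hre_nonneg : 0 ≤ᵐ[μ] fun ω => (f ω).re := hpos.mono fun ω h => by
      have := (Complex.le_def.mp h).1
      simpa using this
    have hz_im : (∫ ω, f ω ∂μ).im = 0 := by
      have h1 := integral_im (μ := μ) hfint
      simp only [RCLike.im_to_complex] at h1
      rw [← h1]
      exact integral_eq_zero_of_ae him
    have hz_re : (∫ ω, f ω ∂μ).re = ∫ ω, (f ω).re ∂μ := by
      have h1 := integral_re (μ := μ) hfint
      simp only [RCLike.re_to_complex] at h1
      exact h1.symm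
    have h1 : ((0 : ℂ) < ∫ ω, f ω ∂μ) ↔ 0 < (∫ ω, f ω ∂μ).re := by
      rw [Complex.lt_def]
      simp [hz_im]
    have h2 : (0 < (∫ ω, f ω ∂μ).re) ↔ ¬ ((∫ ω, (f ω).re ∂μ) = 0) := by
      rw [hz_re]
      constructor
      · intro h h0; rw [h0] at h; exact lt_irrefl 0 h
      · intro h; exact lt_of_le_of_ne (integral_nonneg_of_ae hre_nonneg) (Ne.symm h)
    have h3 : ((∫ ω, (f ω).re ∂μ) = 0) ↔ (fun ω => (f ω).re) =ᵐ[μ] 0 :=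
      integral_eq_zero_iff_of_nonneg_ae hre_nonneg hfint.re
    have h4 : ((fun ω => (f ω).re) =ᵐ[μ] 0) ↔ (∀ᵐ ω ∂μ, S ω *ᵥ Q ω = 0) := by
      constructor
      · intro h
        filter_upwards [h, him, hSpsd] with ω hre' him' hpsd
        refine (hpsd.dotProduct_mulVec_zero_iff (Q ω)).mp ?_
        have : f ω = 0 := Complex.ext (by simpa using hre') (by simpa using him')
        exact this
      · intro h
        filter_upwards [h] with ω h0
        show (f ω).re = (0 : ℝ → ℝ) ω
        have : f ω = 0 := by rw [hf]; simp only; rw [h0, dotProduct_zero]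
        simp [this]
    have h5 : (¬ (∀ᵐ ω ∂μ, S ω *ᵥ Q ω = 0)) ↔
        0 < volume {ω | ω ∈ Set.Icc (-π) π ∧ S ω *ᵥ Q ω ≠ 0} := by
      rw [ae_iff, hμ, Measure.restrict_apply' measurableSet_Icc, pos_iff_ne_zero]
      have hset : {ω : ℝ | ¬ S ω *ᵥ Q ω = 0} ∩ Set.Icc (-π) π
          = {ω | ω ∈ Set.Icc (-π) π ∧ S ω *ᵥ Q ω ≠ 0} := by
        ext ω
        simp only [Set.mem_inter_iff, Set.mem_setOf_eq, Ne]
        exact and_comm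
      rw [hset]
    rw [hz, h1, h2, h3, h4, ← h5]
  -- assemble the two directions
  constructor
  · intro hpd q hq
    have hx : (fun p : Fin N × Fin n => q p.1 p.2) ≠ 0 := by
      intro h
      apply hq
      funext k i
      exact congrFun h (k, i)
    exact (key q).mp (hpd.dotProduct_mulVec_pos hx)
  · intro h
    refine Matrix.PosDef.of_dotProduct_mulVec_pos hherm fun x hx => ?_
    have hq : (fun k i => x (k, i)) ≠ (0 : Fin N → Fin n → ℂ) := by
      intro h0
      apply hx
      funext p
      exact congrFun (congrFun h0 p.1) p.2
    have hxq : x = fun p : Fin N × Fin n => (fun k i => x (k, i)) p.1 p.2 := by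
      funext p; rfl
    rw [hxq]
    exact (key _).mpr (h _ hq)
end

section
/- Let μ be a finite positive Borel measure on the half-open interval [-π, π) and let N be a positive integer. Define R : ℤ → ℂ by R(k) = ∫_{[-π,π)} e^{ikω} dμ(ω), and let T_N be the N × N Toeplitz matrix with entries (T_N)_{l,m} = R(m − l) for 1 ≤ l, m ≤ N. Then T_N is positive definite if and only if the support of μ contains at least N points. In particular, if the support of μ contains at least N distinct frequencies then T_N is positive definite, and if the support contains fewer than N points then T_N is singular. -/
open MeasureTheory Matrix Real
open scoped ComplexOrder
lemma integrable_cexp (μ : Measure ℝ) [IsFiniteMeasure μ] (k : ℤ) :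
    Integrable (fun ω : ℝ => Complex.exp (Complex.I * k * ω)) μ := by
  refine Integrable.mono' (integrable_const 1) ?_ ?_
  · exact (Complex.continuous_exp.comp (by fun_prop)).aestronglyMeasurable
  · filter_upwards with ω
    have h : Complex.I * k * ω = ((k * ω : ℝ) : ℂ) * Complex.I := by push_cast; ring
    rw [h]
    rw [Complex.norm_exp_ofReal_mul_I]

lemma pointwise_id (N : ℕ) (q : Fin N → ℂ) (ω : ℝ) :
    ∑ l : Fin N, ∑ m : Fin N,
      (starRingEnd ℂ) (q l) * q m * Complex.exp (Complex.I * (((m:ℤ) - (l:ℤ) : ℤ) : ℂ) * ω)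
      = (Complex.normSq (∑ m : Fin N, q m * Complex.exp (Complex.I * (m:ℤ) * ω)) : ℂ) := by
  rw [Complex.normSq_eq_conj_mul_self, map_sum, Finset.sum_mul_sum]
  refine Finset.sum_congr rfl fun l _ => Finset.sum_congr rfl fun m _ => ?_
  rw [RingHom.map_mul, ← Complex.exp_conj, mul_mul_mul_comm, ← Complex.exp_add]
  congr 1
  simp only [_root_.map_mul, Complex.conj_I, Complex.conj_ofReal, map_intCast]
  push_cast
  ring_nf

set_option maxHeartbeats 1000000 in
lemma quad (N : ℕ) (μ : Measure ℝ) [IsFiniteMeasure μ]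
    (T : Matrix (Fin N) (Fin N) ℂ)
    (hT : ∀ l m : Fin N, T l m = ∫ ω, Complex.exp (Complex.I * (((m:ℤ) - (l:ℤ) : ℤ) : ℂ) * ω) ∂μ)
    (q : Fin N → ℂ) :
    star q ⬝ᵥ (T *ᵥ q)
      = ((∫ ω, Complex.normSq (∑ m : Fin N, q m * Complex.exp (Complex.I * (m:ℤ) * ω)) ∂μ : ℝ) : ℂ) := by
  have hint : ∀ l m : Fin N, Integrable
      (fun ω : ℝ => (starRingEnd ℂ) (q l) * q m * Complex.exp (Complex.I * (((m:ℤ) - (l:ℤ) : ℤ) : ℂ) * ω)) μ :=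
    fun l m => (integrable_cexp μ ((m:ℤ) - (l:ℤ))).const_mul _
  have step1 : star q ⬝ᵥ (T *ᵥ q)
      = ∑ l : Fin N, ∑ m : Fin N, ∫ ω, (starRingEnd ℂ) (q l) * q m *
          Complex.exp (Complex.I * (((m:ℤ) - (l:ℤ) : ℤ) : ℂ) * ω) ∂μ := by
    simp only [dotProduct, mulVec, dotProduct, Pi.star_apply, Finset.mul_sum]
    refine Finset.sum_congr rfl fun l _ => Finset.sum_congr rfl fun m _ => ?_
    calc star (q l) * (T l m * q m)
        = (starRingEnd ℂ) (q l) * ((∫ ω, Complex.exp (Complex.I * (((m:ℤ) - (l:ℤ) : ℤ) : ℂ) * ω) ∂μ) * q m) := by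
          rw [hT l m]; rfl
      _ = (starRingEnd ℂ) (q l) * (∫ ω, Complex.exp (Complex.I * (((m:ℤ) - (l:ℤ) : ℤ) : ℂ) * ω) * q m ∂μ) := by
          rw [integral_mul_const]
      _ = ∫ ω, (starRingEnd ℂ) (q l) * (Complex.exp (Complex.I * (((m:ℤ) - (l:ℤ) : ℤ) : ℂ) * ω) * q m) ∂μ :=
          (integral_const_mul _ _).symm
      _ = ∫ ω, (starRingEnd ℂ) (q l) * q m * Complex.exp (Complex.I * (((m:ℤ) - (l:ℤ) : ℤ) : ℂ) * ω) ∂μ := by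
          congr 1; funext ω; ring
  rw [step1, show ((∫ ω, Complex.normSq (∑ m : Fin N, q m * Complex.exp (Complex.I * (m:ℤ) * ω)) ∂μ : ℝ) : ℂ) = ∫ ω, ((Complex.normSq (∑ m : Fin N, q m * Complex.exp (Complex.I * (m:ℤ) * ω)) : ℝ) : ℂ) ∂μ from (integral_ofReal (𝕜 := ℂ)).symm]
  rw [show (fun ω : ℝ => ((Complex.normSq (∑ m : Fin N, q m * Complex.exp (Complex.I * (m:ℤ) * ω)) : ℝ) : ℂ))
      = fun ω : ℝ => ∑ l : Fin N, ∑ m : Fin N, (starRingEnd ℂ) (q l) * q m *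
          Complex.exp (Complex.I * (((m:ℤ) - (l:ℤ) : ℤ) : ℂ) * ω) from funext fun ω => (pointwise_id N q ω).symm]
  rw [integral_finset_sum _ (fun l _ => integrable_finset_sum _ (fun m _ => hint l m))]
  exact Finset.sum_congr rfl fun l _ => (integral_finset_sum _ (fun m _ => hint l m)).symm
lemma herm (N : ℕ) (μ : Measure ℝ) [IsFiniteMeasure μ]
    (T : Matrix (Fin N) (Fin N) ℂ)
    (hT : ∀ l m : Fin N, T l m = ∫ ω, Complex.exp (Complex.I * (((m:ℤ) - (l:ℤ) : ℤ) : ℂ) * ω) ∂μ) :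
    T.IsHermitian := by
  refine Matrix.IsHermitian.ext fun i j => ?_
  show star (T j i) = T i j
  rw [hT i j, hT j i, RCLike.star_def, ← integral_conj]
  congr 1; funext ω
  rw [← Complex.exp_conj]
  congr 1
  simp only [_root_.map_mul, Complex.conj_I, Complex.conj_ofReal, map_intCast]
  push_cast
  ring

lemma int_normSq (N : ℕ) (μ : Measure ℝ) [IsFiniteMeasure μ] (q : Fin N → ℂ) :
    Integrable (fun ω : ℝ =>
      Complex.normSq (∑ m : Fin N, q m * Complex.exp (Complex.I * (m:ℤ) * ω))) μ := by
  refine Integrable.mono' (integrable_const ((∑ m : Fin N, ‖q m‖)^2)) ?_ ?_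
  · have hc : Continuous fun ω : ℝ => ∑ m : Fin N, q m * Complex.exp (Complex.I * (m:ℤ) * ω) := by
      fun_prop
    exact (Complex.continuous_normSq.comp hc).aestronglyMeasurable
  · filter_upwards with ω
    rw [Real.norm_eq_abs, abs_of_nonneg (Complex.normSq_nonneg _)]
    have h1 : ‖∑ m : Fin N, q m * Complex.exp (Complex.I * (m:ℤ) * ω)‖
        ≤ ∑ m : Fin N, ‖q m‖ := by
      refine (norm_sum_le _ _).trans ?_
      refine Finset.sum_le_sum fun m _ => ?_
      rw [norm_mul]
      have : Complex.I * ((m:ℤ):ℂ) * ω = (((m:ℤ) * ω : ℝ) : ℂ) * Complex.I := by push_cast; ring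
      rw [this, Complex.norm_exp_ofReal_mul_I, mul_one]
    calc Complex.normSq (∑ m : Fin N, q m * Complex.exp (Complex.I * (m:ℤ) * ω))
        = (‖∑ m : Fin N, q m * Complex.exp (Complex.I * (m:ℤ) * ω)‖)^2 := by
          rw [Complex.sq_norm]
      _ ≤ (∑ m : Fin N, ‖q m‖)^2 := by
          exact pow_le_pow_left₀ (norm_nonneg _) h1 2
lemma factA (μ : Measure ℝ) : μ {x : ℝ | ∀ U : Set ℝ, IsOpen U → x ∈ U → 0 < μ U}ᶜ = 0 := by
  set B0 : Set (Set ℝ) := {V | V ∈ TopologicalSpace.countableBasis ℝ ∧ μ V = 0} with hB0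
  have hsub : {x : ℝ | ∀ U : Set ℝ, IsOpen U → x ∈ U → 0 < μ U}ᶜ ⊆ ⋃₀ B0 := by
    intro x hx
    simp only [Set.mem_compl_iff, Set.mem_setOf_eq, not_forall] at hx
    obtain ⟨U, hU, hxU, hμU⟩ := hx
    have hμU0 : μ U = 0 := by simpa [pos_iff_ne_zero] using hμU
    obtain ⟨V, hVB, hxV, hVU⟩ :=
      (TopologicalSpace.isBasis_countableBasis ℝ).exists_subset_of_mem_open hxU hU
    exact ⟨V, ⟨hVB, le_antisymm (hμU0 ▸ measure_mono hVU) zero_le⟩, hxV⟩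
  refine measure_mono_null hsub ?_
  rw [measure_sUnion_null_iff ((TopologicalSpace.countable_countableBasis ℝ).mono
    (fun V hV => hV.1))]
  exact fun s hs => hs.2

lemma encard_lt (N : ℕ) (hN : 0 < N) (μ : Measure ℝ) [IsFiniteMeasure μ]
    (hμsupp : μ (Set.Ico (-π) π)ᶜ = 0) (q : Fin N → ℂ) (hq : q ≠ 0)
    (h0 : μ {ω : ℝ | ∑ m : Fin N, q m * Complex.exp (Complex.I * (m:ℤ) * ω) ≠ 0} = 0) :
    {x : ℝ | ∀ U : Set ℝ, IsOpen U → x ∈ U → 0 < μ U}.encard < (N : ℕ∞) := by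
  set S := {x : ℝ | ∀ U : Set ℝ, IsOpen U → x ∈ U → 0 < μ U} with hS
  set p : ℝ → ℂ := fun ω => ∑ m : Fin N, q m * Complex.exp (Complex.I * (m:ℤ) * ω) with hp
  have hpc : Continuous p := by rw [hp]; fun_prop
  have hSzero : S ⊆ {ω | p ω = 0} := by
    intro x hx
    by_contra hpx
    have hpos := hx (p ⁻¹' ({0}ᶜ : Set ℂ)) (isOpen_compl_singleton.preimage hpc) hpx
    rw [show p ⁻¹' ({0}ᶜ : Set ℂ) = {ω | p ω ≠ 0} from rfl, h0] at hpos
    exact lt_irrefl _ hpos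
  have hSIcc : S ⊆ Set.Icc (-π) π := by
    intro x hx
    by_contra hxI
    have hpos := hx _ isClosed_Icc.isOpen_compl hxI
    have hz : μ (Set.Icc (-π) π)ᶜ = 0 :=
      measure_mono_null (Set.compl_subset_compl.mpr Set.Ico_subset_Icc_self) hμsupp
    rw [hz] at hpos; exact lt_irrefl _ hpos
  set Q : Polynomial ℂ := ∑ m : Fin N, Polynomial.C (q m) * Polynomial.X ^ (m : ℕ) with hQ
  have hQcoeff : ∀ m : Fin N, Q.coeff (m:ℕ) = q m := by
    intro m
    rw [hQ, Polynomial.finset_sum_coeff, Finset.sum_eq_single m]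
    · rw [Polynomial.coeff_C_mul, Polynomial.coeff_X_pow, if_pos rfl, mul_one]
    · intro b _ hb
      rw [Polynomial.coeff_C_mul, Polynomial.coeff_X_pow,
        if_neg (fun h => hb (Fin.val_injective h.symm)), mul_zero]
    · intro hm; exact absurd (Finset.mem_univ m) hm
  have hQne : Q ≠ 0 := by
    obtain ⟨m, hm⟩ := Function.ne_iff.mp hq
    intro h
    apply hm
    rw [← hQcoeff m, h]
    simp
  have hQdeg : Q.natDegree < N := by
    have h1 : Q.natDegree ≤ N - 1 := by
      rw [hQ]
      refine Polynomial.natDegree_sum_le_of_forall_le _ _ (fun m _ => ?_)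
      refine le_trans (Polynomial.natDegree_C_mul_le _ _) ?_
      rw [Polynomial.natDegree_X_pow]
      omega
    omega
  have hpQ : ∀ ω : ℝ, p ω = Q.eval (Complex.exp (Complex.I * ω)) := by
    intro ω
    rw [hp, hQ, Polynomial.eval_finset_sum]
    refine Finset.sum_congr rfl fun m _ => ?_
    rw [Polynomial.eval_mul, Polynomial.eval_C, Polynomial.eval_pow, Polynomial.eval_X,
      ← Complex.exp_nat_mul]
    congr 2
    push_cast
    ring
  have hinj : Set.InjOn (fun ω : ℝ => Complex.exp (Complex.I * ω)) (Set.Ico (-π) π) := by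
    intro a ha b hb hab
    obtain ⟨n, hn⟩ := Complex.exp_eq_exp_iff_exists_int.mp hab
    have h2 : (a:ℂ) = b + n * (2*π) := by
      apply mul_left_cancel₀ Complex.I_ne_zero
      rw [show (Complex.I : ℂ) * (b + n * (2*π)) = Complex.I * b + n * (2 * π * Complex.I) by ring]
      exact hn
    have h3 : a = b + n * (2*π) := by exact_mod_cast h2
    have hπ0 := Real.pi_pos
    obtain ⟨ha1, ha2⟩ := ha
    obtain ⟨hb1, hb2⟩ := hb
    have hn0 : n = 0 := by
      have h4 : -1 < (n:ℝ) := by nlinarith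
      have h5 : (n:ℝ) < 1 := by nlinarith
      have h6 : -1 < n := by exact_mod_cast h4
      have h7 : n < 1 := by exact_mod_cast h5
      omega
    rw [hn0] at h3
    simpa using h3
  set A := Set.Ico (-π) π ∩ {ω | p ω = 0} with hA
  have hAroots : ∀ x ∈ A, Complex.exp (Complex.I * x) ∈ Q.roots.toFinset := by
    intro x hx
    rw [Multiset.mem_toFinset, Polynomial.mem_roots hQne]
    have := hx.2
    rw [Set.mem_setOf_eq, hpQ x] at this
    exact this
  have hAfin : A.Finite := by
    apply Set.Finite.of_finite_image _ (hinj.mono Set.inter_subset_left)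
    apply Set.Finite.subset (Q.roots.toFinset.finite_toSet)
    rintro y ⟨x, hx, rfl⟩
    exact hAroots x hx
  have hAcard : A.encard ≤ (Q.natDegree : ℕ∞) := by
    rw [← Set.InjOn.encard_image (hinj.mono Set.inter_subset_left)]
    have himg : (fun ω : ℝ => Complex.exp (Complex.I * ω)) '' A ⊆ (Q.roots.toFinset : Set ℂ) := by
      rintro y ⟨x, hx, rfl⟩
      exact hAroots x hx
    refine le_trans (Set.encard_mono himg) ?_
    rw [Set.encard_coe_eq_coe_finsetCard]
    have hle := le_trans (Multiset.toFinset_card_le Q.roots) (Polynomial.card_roots' Q)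
    exact_mod_cast hle
  have hSsub : S ⊆ A ∪ {π} := by
    intro x hx
    rcases eq_or_lt_of_le (hSIcc hx).2 with heq | hlt
    · exact Or.inr heq
    · exact Or.inl ⟨⟨(hSIcc hx).1, hlt⟩, hSzero hx⟩
  have hπS : π ∉ S := by
    intro hπS
    have hπA : π ∉ A := fun h => lt_irrefl π h.1.2
    obtain ⟨ε, hε, hball⟩ := Metric.isOpen_iff.mp hAfin.isClosed.isOpen_compl π hπA
    have hpos := hπS _ Metric.isOpen_ball (Metric.mem_ball_self hε)
    have hzero : μ (Metric.ball π ε) = 0 := by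
      refine measure_mono_null (fun y hy => ?_) (measure_union_null (factA μ) hμsupp)
      by_contra hyc
      simp only [Set.mem_union, Set.mem_compl_iff, not_or, not_not] at hyc
      obtain ⟨hyS, hyI⟩ := hyc
      rcases hSsub hyS with hyA | hyπ
      · exact hball hy hyA
      · rw [Set.mem_singleton_iff] at hyπ
        rw [hyπ] at hyI
        exact lt_irrefl π hyI.2
    rw [hzero] at hpos
    exact lt_irrefl _ hpos
  have hSA : S ⊆ A := by
    intro x hx
    rcases hSsub hx with h | h
    · exact h
    · rw [Set.mem_singleton_iff] at h
      exact absurd hx (h ▸ hπS)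
  calc S.encard ≤ A.encard := Set.encard_mono hSA
    _ ≤ (Q.natDegree : ℕ∞) := hAcard
    _ < (N : ℕ∞) := by exact_mod_cast hQdeg

lemma integral_eq_sum (μ : Measure ℝ) [IsFiniteMeasure μ] (s : Finset ℝ)
    (hs : μ ((↑s : Set ℝ))ᶜ = 0) (f : ℝ → ℂ) (hf : Integrable f μ) :
    ∫ ω, f ω ∂μ = ∑ x ∈ s, (μ {x}).toReal • f x := by
  have hae : ∀ᵐ x ∂μ, x ∈ (↑s : Set ℝ) := by
    rw [ae_iff]
    exact measure_mono_null (fun x hx => hx) hs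
  rw [← setIntegral_eq_integral_of_ae_compl_eq_zero
    (by filter_upwards [hae] with x hx h'x; exact absurd hx h'x)]
  exact setIntegral_finset s hf.integrableOn

lemma ker_vec (N : ℕ) (hN : 0 < N) (μ : Measure ℝ) [IsFiniteMeasure μ]
    (T : Matrix (Fin N) (Fin N) ℂ)
    (hT : ∀ l m : Fin N, T l m = ∫ ω, Complex.exp (Complex.I * (((m:ℤ) - (l:ℤ) : ℤ) : ℂ) * ω) ∂μ)
    (hcard : {x : ℝ | ∀ U : Set ℝ, IsOpen U → x ∈ U → 0 < μ U}.encard < (N : ℕ∞)) :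
    ∃ v : Fin N → ℂ, v ≠ 0 ∧ T *ᵥ v = 0 := by
  set S := {x : ℝ | ∀ U : Set ℝ, IsOpen U → x ∈ U → 0 < μ U} with hS
  have hfin : S.Finite := by
    rw [← Set.encard_lt_top_iff]
    exact lt_of_lt_of_le hcard le_top
  set s : Finset ℝ := hfin.toFinset with hsdef
  have hscard : s.card < N := by
    have : (s.card : ℕ∞) < (N : ℕ∞) := by
      rw [← Set.encard_coe_eq_coe_finsetCard s, hfin.coe_toFinset]
      exact hcard
    exact_mod_cast this
  have hμs : μ ((↑s : Set ℝ))ᶜ = 0 := by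
    rw [hfin.coe_toFinset]
    exact factA μ
  set P : Polynomial ℂ := ∏ x ∈ s, (Polynomial.X - Polynomial.C (Complex.exp (Complex.I * x)))
    with hP
  have hPmonic : P.Monic := Polynomial.monic_prod_of_monic _ _ fun x _ => Polynomial.monic_X_sub_C _
  have hPdeg : P.natDegree = s.card := by
    rw [hP, Polynomial.natDegree_prod _ _ (fun x _ => Polynomial.X_sub_C_ne_zero _)]
    simp [Polynomial.natDegree_X_sub_C]
  set v : Fin N → ℂ := fun m => P.coeff (m : ℕ) with hv
  refine ⟨v, ?_, ?_⟩
  · intro hv0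
    have h1 : v ⟨s.card, hscard⟩ = 1 := by
      rw [hv]
      simpa [hPdeg] using hPmonic.coeff_natDegree
    rw [hv0] at h1
    simp at h1
  · funext l
    have hroot : ∀ x ∈ s, ∑ m : Fin N, Complex.exp (Complex.I * ((m:ℕ):ℂ) * x) * v m = 0 := by
      intro x hx
      have e : ∀ m : Fin N, Complex.exp (Complex.I * ((m:ℕ):ℂ) * x)
          = (Complex.exp (Complex.I * x)) ^ (m:ℕ) := by
        intro m
        rw [← Complex.exp_nat_mul]
        congr 1
        ring
      have hsum : ∑ m : Fin N, Complex.exp (Complex.I * ((m:ℕ):ℂ) * x) * v m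
          = P.eval (Complex.exp (Complex.I * x)) := by
        rw [Polynomial.eval_eq_sum_range' (lt_of_le_of_lt (le_of_eq hPdeg) hscard),
          ← Fin.sum_univ_eq_sum_range (fun i => P.coeff i * (Complex.exp (Complex.I * x)) ^ i) N]
        refine Finset.sum_congr rfl fun m _ => ?_
        rw [e m, mul_comm]
      rw [hsum, hP, Polynomial.eval_prod]
      exact Finset.prod_eq_zero hx (by simp)
    show ∑ m : Fin N, T l m * v m = 0
    have hTlm : ∀ m : Fin N, T l m = ∑ x ∈ s, (μ {x}).toReal •
        Complex.exp (Complex.I * (((m:ℤ) - (l:ℤ) : ℤ) : ℂ) * x) := by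
      intro m
      rw [hT l m]
      exact integral_eq_sum μ s hμs _ (integrable_cexp μ _)
    calc ∑ m : Fin N, T l m * v m
        = ∑ x ∈ s, (μ {x}).toReal • ∑ m : Fin N,
            Complex.exp (Complex.I * (((m:ℤ) - (l:ℤ) : ℤ) : ℂ) * x) * v m := by
          simp_rw [hTlm, Finset.sum_mul, Finset.smul_sum, smul_mul_assoc]
          rw [Finset.sum_comm]
      _ = 0 := by
          refine Finset.sum_eq_zero fun x hx => ?_
          have hsplit : ∀ m : Fin N, Complex.exp (Complex.I * (((m:ℤ) - (l:ℤ) : ℤ) : ℂ) * x)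
              = Complex.exp (Complex.I * ((m:ℕ):ℂ) * x) / Complex.exp (Complex.I * ((l:ℕ):ℂ) * x) := by
            intro m
            rw [← Complex.exp_sub]
            congr 1
            push_cast
            ring
          simp_rw [hsplit, div_mul_eq_mul_div, ← Finset.sum_div]
          rw [hroot x hx]
          simp

/-- For a finite positive Borel measure `μ` on `[-π, π)`, with
`R(k) = ∫ e^{ikω} dμ(ω)` and `T_N` the `N × N` Toeplitz matrix with entries
`(T_N)_{l,m} = R(m − l)`: `T_N` is positive definite iff the support of `μ`
(the set of points every open neighborhood of which has positive `μ`-measure)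
contains at least `N` points; and if the support has fewer than `N` points then
`T_N` is singular. -/
theorem toeplitz_posDef_iff_support_card
    (N : ℕ) (hN : 0 < N)
    (μ : Measure ℝ) [IsFiniteMeasure μ]
    (hμsupp : μ (Set.Ico (-π) π)ᶜ = 0)
    (R : ℤ → ℂ)
    (hR : ∀ k : ℤ, R k = ∫ ω, Complex.exp (Complex.I * k * ω) ∂μ)
    (T : Matrix (Fin N) (Fin N) ℂ)
    (hT : ∀ l m : Fin N, T l m = R ((m : ℤ) - (l : ℤ))) :
    (T.PosDef ↔
      (N : ℕ∞) ≤ {x : ℝ | ∀ U : Set ℝ, IsOpen U → x ∈ U → 0 < μ U}.encard) ∧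
    ({x : ℝ | ∀ U : Set ℝ, IsOpen U → x ∈ U → 0 < μ U}.encard < (N : ℕ∞) →
      T.det = 0) := by
  have hTint : ∀ l m : Fin N,
      T l m = ∫ ω, Complex.exp (Complex.I * (((m:ℤ) - (l:ℤ) : ℤ) : ℂ) * ω) ∂μ := by
    intro l m
    rw [hT l m, hR]
  constructor
  · constructor
    · intro hpd
      by_contra hlt
      push_neg at hlt
      obtain ⟨v, hv0, hTv⟩ := ker_vec N hN μ T hTint hlt
      have hq := hpd.dotProduct_mulVec_pos hv0
      rw [hTv, dotProduct_zero] at hq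
      exact lt_irrefl _ hq
    · intro hcard
      refine Matrix.PosDef.of_dotProduct_mulVec_pos (herm N μ T hTint) fun v hv => ?_
      rw [quad N μ T hTint v, Complex.zero_lt_real,
        integral_pos_iff_support_of_nonneg (fun ω => Complex.normSq_nonneg _) (int_normSq N μ v)]
      by_contra h
      have h0 : μ (Function.support fun ω : ℝ =>
          Complex.normSq (∑ m : Fin N, v m * Complex.exp (Complex.I * (m:ℤ) * ω))) = 0 := by
        simpa [pos_iff_ne_zero] using h
      have h0' : μ {ω : ℝ | ∑ m : Fin N, v m * Complex.exp (Complex.I * (m:ℤ) * ω) ≠ 0} = 0 := by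
        rw [← h0]
        congr 1
        ext ω
        simp [Function.mem_support, Complex.normSq_eq_zero]
      exact absurd hcard (not_le.mpr (encard_lt N hN μ hμsupp v hv h0'))
  · intro hcard
    obtain ⟨v, hv0, hTv⟩ := ker_vec N hN μ T hTint hcard
    exact Matrix.exists_mulVec_eq_zero_iff.mp ⟨v, hv0, hTv⟩
end

section
/- Let n and N be positive integers and let S : [-π, π] → Matrix n n ℂ be a continuous matrix-valued function such that S(ω) is Hermitian positive semidefinite for every ω ∈ [-π, π]. Suppose there exist N distinct frequencies ω_1, …, ω_N ∈ (-π, π) such that S(ω_j) is positive definite for each j. Define R(k) = ∫_{-π}^{π} e^{ikω} S(ω) dω and let R̄(N) be the Nn × Nn block Toeplitz matrix whose (l,m) block is R(m − l), 1 ≤ l, m ≤ N. Then R̄(N) is positive definite. -/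
open MeasureTheory Matrix Real
open scoped ComplexOrder

lemma exp_key (a b : ℕ) (ω : ℝ) :
    (starRingEnd ℂ) (Complex.exp (Complex.I * a * ω)) * Complex.exp (Complex.I * b * ω)
      = Complex.exp (Complex.I * (((b:ℤ) - (a:ℤ) : ℤ) : ℂ) * ω) := by
  rw [← Complex.exp_conj, ← Complex.exp_add]
  congr 1
  push_cast
  simp only [_root_.map_mul, Complex.conj_I, Complex.conj_ofReal, Complex.conj_natCast]
  ring

lemma exp_inj_aux (a b : ℝ) (ha : a ∈ Set.Ioo (-π) π) (hb : b ∈ Set.Ioo (-π) π)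
    (h : Complex.exp (Complex.I * a) = Complex.exp (Complex.I * b)) : a = b := by
  rw [Complex.exp_eq_exp_iff_exists_int] at h
  obtain ⟨z, hz⟩ := h
  have him := congrArg Complex.im hz
  simp [Complex.mul_im, Complex.add_im, Complex.mul_re] at him
  have hπ := Real.pi_pos
  have hz0 : z = 0 := by
    have hl1 : (z:ℝ) < 1 := by nlinarith [ha.1, ha.2, hb.1, hb.2]
    have hl2 : (-1:ℝ) < z := by nlinarith [ha.1, ha.2, hb.1, hb.2]
    have : -1 < z ∧ z < 1 := ⟨by exact_mod_cast hl2, by exact_mod_cast hl1⟩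
    omega
  rw [hz0] at him
  simpa using him

lemma sum4_reorder {M : Type*} [AddCommMonoid M] {α β : Type*} [Fintype α] [Fintype β]
    (f : α → β → α → β → M) :
    (∑ l : α, ∑ i : β, ∑ m : α, ∑ j : β, f l i m j)
      = ∑ i : β, ∑ j : β, ∑ m : α, ∑ l : α, f l i m j := by
  calc (∑ l : α, ∑ i : β, ∑ m : α, ∑ j : β, f l i m j)
      = ∑ i : β, ∑ l : α, ∑ m : α, ∑ j : β, f l i m j := Finset.sum_comm
    _ = ∑ i : β, ∑ l : α, ∑ j : β, ∑ m : α, f l i m j :=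
        Finset.sum_congr rfl fun i _ => Finset.sum_congr rfl fun l _ => Finset.sum_comm
    _ = ∑ i : β, ∑ j : β, ∑ l : α, ∑ m : α, f l i m j :=
        Finset.sum_congr rfl fun i _ => Finset.sum_comm
    _ = ∑ i : β, ∑ j : β, ∑ m : α, ∑ l : α, f l i m j :=
        Finset.sum_congr rfl fun i _ => Finset.sum_congr rfl fun j _ => Finset.sum_comm

set_option maxHeartbeats 1000000 in
/-- If `S : [-π, π] → Matrix n n ℂ` is continuous, Hermitian positive
semidefinite everywhere on `[-π, π]`, and positive definite at `N` distinct frequencies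
`ω_1, …, ω_N ∈ (-π, π)`, then the `Nn × Nn` block Toeplitz matrix `R̄(N)` built from
`R(k) = ∫_{-π}^{π} e^{ikω} S(ω) dω` with `(l, m)` block `R(m − l)` is positive
definite. -/
theorem block_toeplitz_posDef_of_N_spectral_lines
    (n N : ℕ) (hn : 0 < n) (hN : 0 < N)
    (S : ℝ → Matrix (Fin n) (Fin n) ℂ)
    (hScont : ContinuousOn S (Set.Icc (-π) π))
    (hSpsd : ∀ ω ∈ Set.Icc (-π) π, (S ω).PosSemidef)
    (w : Fin N → ℝ)
    (hw_inj : Function.Injective w)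
    (hw_mem : ∀ j : Fin N, w j ∈ Set.Ioo (-π) π)
    (hw_pd : ∀ j : Fin N, (S (w j)).PosDef)
    (R : ℤ → Matrix (Fin n) (Fin n) ℂ)
    (hR : ∀ (k : ℤ) (i j : Fin n),
      R k i j = ∫ ω in Set.Icc (-π) π, Complex.exp (Complex.I * k * ω) * S ω i j)
    (Rbar : Matrix (Fin N × Fin n) (Fin N × Fin n) ℂ)
    (hRbar : ∀ (l m : Fin N) (i j : Fin n),
      Rbar (l, i) (m, j) = R ((m : ℤ) - (l : ℤ)) i j) :
    Rbar.PosDef := by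
  classical
  have hcont_entry : ∀ i j : Fin n, ContinuousOn (fun ω => S ω i j) (Set.Icc (-π) π) := by
    intro i j
    exact ((continuous_apply j).comp (continuous_apply i)).comp_continuousOn hScont
  have hint_entry : ∀ (k : ℤ) (i j : Fin n),
      IntegrableOn (fun ω : ℝ => Complex.exp (Complex.I * k * ω) * S ω i j) (Set.Icc (-π) π) := by
    intro k i j
    apply ContinuousOn.integrableOn_Icc
    apply ContinuousOn.mul _ (hcont_entry i j)
    exact (Complex.continuous_exp.comp (by continuity)).continuousOn
  have hherm : Rbar.IsHermitian := by
    ext ⟨l, i⟩ ⟨m, j⟩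
    rw [conjTranspose_apply, hRbar, hRbar, hR, hR, Complex.star_def, ← integral_conj]
    apply setIntegral_congr_fun measurableSet_Icc
    intro ω hω
    have h2 : (starRingEnd ℂ) (S ω j i) = S ω i j := by
      have := congrFun (congrFun (hSpsd ω hω).1 i) j
      simpa [conjTranspose_apply] using this
    dsimp only
    rw [_root_.map_mul, h2, ← Complex.exp_conj]
    congr 2
    push_cast
    simp only [_root_.map_mul, map_sub, Complex.conj_I, Complex.conj_ofReal, Complex.conj_natCast]
    ring
  refine posDef_iff_dotProduct_mulVec.mpr ⟨hherm, fun x hx => ?_⟩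
  set p : ℝ → Fin n → ℂ := fun ω i => ∑ m : Fin N, Complex.exp (Complex.I * (m:ℕ) * ω) * x (m, i)
    with hp
  have hQint : ∀ (l m : Fin N) (i j : Fin n), IntegrableOn
      (fun ω : ℝ => (starRingEnd ℂ) (x (l, i)) * x (m, j) *
        (Complex.exp (Complex.I * (((m:ℤ) - (l:ℤ) : ℤ) : ℂ) * ω) * S ω i j))
      (Set.Icc (-π) π) := by
    intro l m i j
    exact (hint_entry ((m:ℤ) - (l:ℤ)) i j).const_mul ((starRingEnd ℂ) (x (l, i)) * x (m, j))
  have h1 : ∀ ω : ℝ, star (p ω) ⬝ᵥ (S ω *ᵥ p ω)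
      = ∑ i : Fin n, ∑ j : Fin n, ∑ m : Fin N, ∑ l : Fin N,
          (starRingEnd ℂ) (x (l, i)) * x (m, j) *
            (Complex.exp (Complex.I * (((m:ℤ) - (l:ℤ) : ℤ) : ℂ) * ω) * S ω i j) := by
    intro ω
    simp only [dotProduct, mulVec, Pi.star_apply, hp, star_sum, star_mul',
      Complex.star_def, Finset.sum_mul, Finset.mul_sum]
    refine Finset.sum_congr rfl fun i _ => Finset.sum_congr rfl fun j _ =>
      Finset.sum_congr rfl fun m _ => Finset.sum_congr rfl fun l _ => ?_
    rw [← exp_key (l:ℕ) (m:ℕ) ω]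
    ring
  have key : star x ⬝ᵥ Rbar *ᵥ x
      = ∫ ω in Set.Icc (-π) π, star (p ω) ⬝ᵥ (S ω *ᵥ p ω) := by
    calc star x ⬝ᵥ Rbar *ᵥ x
        = ∑ l : Fin N, ∑ i : Fin n, ∑ m : Fin N, ∑ j : Fin n,
            (starRingEnd ℂ) (x (l, i)) * x (m, j) * R ((m:ℤ) - (l:ℤ)) i j := by
          simp only [dotProduct, mulVec, Pi.star_apply, Fintype.sum_prod_type,
            Finset.mul_sum, Complex.star_def]
          refine Finset.sum_congr rfl fun l _ => Finset.sum_congr rfl fun i _ =>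
            Finset.sum_congr rfl fun m _ => Finset.sum_congr rfl fun j _ => ?_
          rw [hRbar]
          ring
      _ = ∑ i : Fin n, ∑ j : Fin n, ∑ m : Fin N, ∑ l : Fin N,
            (starRingEnd ℂ) (x (l, i)) * x (m, j) * R ((m:ℤ) - (l:ℤ)) i j :=
          sum4_reorder (fun l i m j =>
            (starRingEnd ℂ) (x (l, i)) * x (m, j) * R ((m:ℤ) - (l:ℤ)) i j)
      _ = ∑ i : Fin n, ∑ j : Fin n, ∑ m : Fin N, ∑ l : Fin N,
            ∫ ω in Set.Icc (-π) π, (starRingEnd ℂ) (x (l, i)) * x (m, j) *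
              (Complex.exp (Complex.I * (((m:ℤ) - (l:ℤ) : ℤ) : ℂ) * ω) * S ω i j) := by
          refine Finset.sum_congr rfl fun i _ => Finset.sum_congr rfl fun j _ =>
            Finset.sum_congr rfl fun m _ => Finset.sum_congr rfl fun l _ => ?_
          rw [hR, ← integral_const_mul]
      _ = ∫ ω in Set.Icc (-π) π, ∑ i : Fin n, ∑ j : Fin n, ∑ m : Fin N, ∑ l : Fin N,
            (starRingEnd ℂ) (x (l, i)) * x (m, j) *
              (Complex.exp (Complex.I * (((m:ℤ) - (l:ℤ) : ℤ) : ℂ) * ω) * S ω i j) := by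
          rw [integral_finset_sum _ (fun i _ => integrable_finset_sum _ fun j _ =>
            integrable_finset_sum _ fun m _ => integrable_finset_sum _ fun l _ => hQint l m i j)]
          refine Finset.sum_congr rfl fun i _ => ?_
          rw [integral_finset_sum _ (fun j _ => integrable_finset_sum _ fun m _ =>
            integrable_finset_sum _ fun l _ => hQint l m i j)]
          refine Finset.sum_congr rfl fun j _ => ?_
          rw [integral_finset_sum _ (fun m _ => integrable_finset_sum _ fun l _ => hQint l m i j)]
          refine Finset.sum_congr rfl fun m _ => ?_
          rw [integral_finset_sum _ (fun l _ => hQint l m i j)]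
      _ = ∫ ω in Set.Icc (-π) π, star (p ω) ⬝ᵥ (S ω *ᵥ p ω) :=
          setIntegral_congr_fun measurableSet_Icc fun ω _ => (h1 ω).symm
  rw [key]
  have hpcont : ∀ i : Fin n, Continuous fun ω : ℝ => p ω i := by
    intro i
    apply continuous_finset_sum
    intro m _
    exact (Complex.continuous_exp.comp (by continuity)).mul continuous_const
  have hfcont : ContinuousOn (fun ω : ℝ => star (p ω) ⬝ᵥ (S ω *ᵥ p ω)) (Set.Icc (-π) π) := by
    simp only [dotProduct, mulVec, Pi.star_apply]
    apply continuousOn_finset_sum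
    intro i _
    apply ContinuousOn.mul
    · exact (continuous_star.comp (hpcont i)).continuousOn
    · apply continuousOn_finset_sum
      intro j _
      exact (hcont_entry i j).mul (hpcont j).continuousOn
  have hfint : IntegrableOn (fun ω : ℝ => star (p ω) ⬝ᵥ (S ω *ᵥ p ω)) (Set.Icc (-π) π) :=
    hfcont.integrableOn_Icc
  have hfnn : ∀ ω ∈ Set.Icc (-π) π, 0 ≤ star (p ω) ⬝ᵥ (S ω *ᵥ p ω) :=
    fun ω hω => (hSpsd ω hω).dotProduct_mulVec_nonneg (p ω)
  have hexists : ∃ j0 : Fin N, p (w j0) ≠ 0 := by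
    obtain ⟨a, ha⟩ : ∃ a, x a ≠ 0 := by
      by_contra hcon
      push_neg at hcon
      exact hx (funext hcon)
    obtain ⟨m0, i0⟩ := a
    by_contra hcon
    push_neg at hcon
    set P : Polynomial ℂ := ∑ m : Fin N, Polynomial.C (x (m, i0)) * Polynomial.X ^ (m : ℕ)
      with hP
    have hco : P.coeff (m0 : ℕ) = x (m0, i0) := by
      rw [hP, Polynomial.finset_sum_coeff]
      rw [Finset.sum_eq_single m0]
      · simp
      · intro b _ hb
        simp only [Polynomial.coeff_C_mul, Polynomial.coeff_X_pow]
        rw [if_neg (by simpa [Fin.val_inj, eq_comm] using hb)]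
        ring
      · simp
    have hPne : P ≠ 0 := fun h0 => ha (by rw [← hco, h0, Polynomial.coeff_zero])
    have hdeg : P.natDegree < N := by
      have hle : P.natDegree ≤ N - 1 := by
        apply Polynomial.natDegree_sum_le_of_forall_le
        intro m _
        exact (Polynomial.natDegree_C_mul_X_pow_le _ _).trans (by omega)
      omega
    have hinj : Function.Injective fun j : Fin N => Complex.exp (Complex.I * w j) := by
      intro a b hab
      exact hw_inj (exp_inj_aux _ _ (hw_mem a) (hw_mem b) hab)
    have hexpm : ∀ (j : Fin N) (m : Fin N),
        Complex.exp (Complex.I * (m:ℕ) * (w j)) = Complex.exp (Complex.I * w j) ^ (m:ℕ) := by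
      intro j m
      rw [← Complex.exp_nat_mul]
      congr 1
      ring
    have heval : ∀ j : Fin N, P.eval (Complex.exp (Complex.I * w j)) = 0 := by
      intro j
      have hpj := congrFun (hcon j) i0
      simp only [hp, Pi.zero_apply] at hpj
      calc P.eval (Complex.exp (Complex.I * w j))
          = ∑ m : Fin N, Complex.exp (Complex.I * (m:ℕ) * (w j)) * x (m, i0) := by
            rw [hP, Polynomial.eval_finset_sum]
            refine Finset.sum_congr rfl fun m _ => ?_
            rw [Polynomial.eval_mul, Polynomial.eval_C, Polynomial.eval_pow,
              Polynomial.eval_X, hexpm j m, mul_comm]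
        _ = 0 := hpj
    exact hPne (Polynomial.eq_zero_of_natDegree_lt_card_of_eval_eq_zero P hinj heval
      (by simpa using hdeg))
  obtain ⟨j0, hpj0⟩ := hexists
  have hfj0 : 0 < star (p (w j0)) ⬝ᵥ (S (w j0) *ᵥ p (w j0)) := (hw_pd j0).dotProduct_mulVec_pos hpj0
  set g : ℝ → ℝ := fun ω => (star (p ω) ⬝ᵥ (S ω *ᵥ p ω)).re with hg
  have hreal : ∀ ω ∈ Set.Icc (-π) π,
      star (p ω) ⬝ᵥ (S ω *ᵥ p ω) = (g ω : ℂ) := by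
    intro ω hω
    have h0 := hfnn ω hω
    rw [Complex.le_def] at h0
    apply Complex.ext
    · simp [hg]
    · simp [hg, ← h0.2]
  have hiq : (∫ ω in Set.Icc (-π) π, star (p ω) ⬝ᵥ (S ω *ᵥ p ω))
      = ((∫ ω in Set.Icc (-π) π, g ω : ℝ) : ℂ) := by
    rw [setIntegral_congr_fun measurableSet_Icc hreal]
    exact integral_ofReal
  rw [hiq, Complex.zero_lt_real]
  have hgint : IntegrableOn g (Set.Icc (-π) π) := hfint.re
  have hgnn : 0 ≤ᵐ[volume.restrict (Set.Icc (-π) π)] g := by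
    filter_upwards [ae_restrict_mem measurableSet_Icc] with ω hω
    have h0 := hfnn ω hω
    rw [Complex.le_def] at h0
    simpa [hg] using h0.1
  rw [setIntegral_pos_iff_support_of_nonneg_ae hgnn hgint]
  have hnb : Set.Icc (-π) π ∈ nhds (w j0) := Icc_mem_nhds (hw_mem j0).1 (hw_mem j0).2
  have hgc : ContinuousAt g (w j0) :=
    Complex.continuous_re.continuousAt.comp (hfcont.continuousAt hnb)
  have hgj0 : 0 < g (w j0) := by
    rw [Complex.lt_def] at hfj0
    simpa [hg] using hfj0.1
  have hmem : g ⁻¹' Set.Ioi 0 ∩ Set.Icc (-π) π ∈ nhds (w j0) :=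
    Filter.inter_mem (hgc (Ioi_mem_nhds hgj0)) hnb
  refine lt_of_lt_of_le (Measure.measure_pos_of_mem_nhds (μ := volume) hmem) (measure_mono ?_)
  intro ω hω
  exact ⟨ne_of_gt hω.1, hω.2⟩
end
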